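/- For any γ₁, γ₂ ∈ [0,1) and bounded ℓ with ‖ℓ‖_∞ ≤ M, the corresponding fixed points B_{γ₁}, B_{γ₂} of the discounted backup (T_γ B)(t) = (1−γ)ℓ(t) + γ min{ℓ(t), B(t+1)} satisfy ‖B_{γ₁} − B_{γ₂}‖_∞ ≤ 2M·|γ₁ − γ₂| / (1 − max{γ₁, γ₂}). -/

import Mathlib

lemma abs_min_le_max_abs (a b : ℝ) : |min a b| ≤ max |a| |b| := by
  rcases min_choice a b with h | h <;> rw [h]
  · exact le_max_left _ _
  · exact le_max_right _ _

lemma abs_min_sub_min_le (a b c : ℝ) : |min a b - min a c| ≤ |b - c| := by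
  rcases le_total b c with h | h <;>
  · simp [min_def]
    split_ifs <;> rw [abs_le] at * <;> constructor <;> linarith [abs_nonneg (b - c),
      abs_le.mp (le_refl |b - c|)]

/-- Perturbation bound in the discount factor: for `γ₁, γ₂ ∈ [0,1)` and `‖ℓ‖_∞ ≤ M`,
the bounded fixed points of the corresponding discounted barrier backups satisfy
`‖B₁ - B₂‖_∞ ≤ 2 M |γ₁ - γ₂| / (1 - max γ₁ γ₂)`. -/
theorem discounted_fixed_point_discount_perturbation (γ₁ γ₂ : ℝ)
    (hγ₁ : γ₁ ∈ Set.Ico (0:ℝ) 1) (hγ₂ : γ₂ ∈ Set.Ico (0:ℝ) 1)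
    (ℓ B₁ B₂ : ℕ → ℝ) (M : ℝ) (hℓ : ∀ t, |ℓ t| ≤ M)
    (hB₁bdd : ∃ C, ∀ t, |B₁ t| ≤ C) (hB₂bdd : ∃ C, ∀ t, |B₂ t| ≤ C)
    (hfix₁ : ∀ t, B₁ t = (1 - γ₁) * ℓ t + γ₁ * min (ℓ t) (B₁ (t + 1)))
    (hfix₂ : ∀ t, B₂ t = (1 - γ₂) * ℓ t + γ₂ * min (ℓ t) (B₂ (t + 1))) :
    ∀ t, |B₁ t - B₂ t| ≤ 2 * M * |γ₁ - γ₂| / (1 - max γ₁ γ₂) := by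
  obtain ⟨hγ₁0, hγ₁1⟩ := hγ₁
  obtain ⟨hγ₂0, hγ₂1⟩ := hγ₂
  have hM : 0 ≤ M := (abs_nonneg _).trans (hℓ 0)
  obtain ⟨C₂, hC₂⟩ := hB₂bdd
  obtain ⟨C₁, hC₁⟩ := hB₁bdd
  -- B₂ is bounded by M
  have hbdd₂ : BddAbove (Set.range fun t => |B₂ t|) :=
    ⟨C₂, by rintro _ ⟨t, rfl⟩; exact hC₂ t⟩
  set S := ⨆ t, |B₂ t| with hSdef
  have hleS : ∀ t, |B₂ t| ≤ S := fun t => le_ciSup hbdd₂ t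
  have hB₂M : ∀ t, |B₂ t| ≤ M := by
    have key : S ≤ (1 - γ₂) * M + γ₂ * max M S := by
      apply ciSup_le
      intro t
      rw [hfix₂ t]
      have h1 : |(1 - γ₂) * ℓ t| ≤ (1 - γ₂) * M := by
        rw [abs_mul, abs_of_nonneg (by linarith : (0:ℝ) ≤ 1 - γ₂)]
        exact mul_le_mul_of_nonneg_left (hℓ t) (by linarith)
      have h2 : |γ₂ * min (ℓ t) (B₂ (t + 1))| ≤ γ₂ * max M S := by
        rw [abs_mul, abs_of_nonneg hγ₂0]
        refine mul_le_mul_of_nonneg_left ?_ hγ₂0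
        exact (abs_min_le_max_abs _ _).trans (max_le_max (hℓ t) (hleS (t + 1)))
      calc |(1 - γ₂) * ℓ t + γ₂ * min (ℓ t) (B₂ (t + 1))|
          ≤ |(1 - γ₂) * ℓ t| + |γ₂ * min (ℓ t) (B₂ (t + 1))| := abs_add_le _ _
        _ ≤ (1 - γ₂) * M + γ₂ * max M S := add_le_add h1 h2
    have hSM : S ≤ M := by
      rcases le_total S M with h | h
      · exact h
      · rw [max_eq_right h] at key
        nlinarith
    exact fun t => (hleS t).trans hSM
  -- now the difference
  have hbddD : BddAbove (Set.range fun t => |B₁ t - B₂ t|) :=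
    ⟨C₁ + M, by
      rintro _ ⟨t, rfl⟩
      exact (abs_sub _ _).trans (add_le_add (hC₁ t) (hB₂M t))⟩
  set D := ⨆ t, |B₁ t - B₂ t| with hDdef
  have hleD : ∀ t, |B₁ t - B₂ t| ≤ D := fun t => le_ciSup hbddD t
  have hD0 : 0 ≤ D := (abs_nonneg _).trans (hleD 0)
  have key : D ≤ 2 * M * |γ₁ - γ₂| + γ₁ * D := by
    apply ciSup_le
    intro t
    have heq : B₁ t - B₂ t = (γ₂ - γ₁) * ℓ t + (γ₁ - γ₂) * min (ℓ t) (B₂ (t + 1))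
        + γ₁ * (min (ℓ t) (B₁ (t + 1)) - min (ℓ t) (B₂ (t + 1))) := by
      rw [hfix₁ t, hfix₂ t]; ring
    rw [heq]
    have h1 : |(γ₂ - γ₁) * ℓ t| ≤ |γ₁ - γ₂| * M := by
      rw [abs_mul, abs_sub_comm]
      exact mul_le_mul_of_nonneg_left (hℓ t) (abs_nonneg _)
    have h2 : |(γ₁ - γ₂) * min (ℓ t) (B₂ (t + 1))| ≤ |γ₁ - γ₂| * M := by
      rw [abs_mul]
      refine mul_le_mul_of_nonneg_left ?_ (abs_nonneg _)
      exact (abs_min_le_max_abs _ _).trans (max_le (hℓ t) (hB₂M (t + 1)))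
    have h3 : |γ₁ * (min (ℓ t) (B₁ (t + 1)) - min (ℓ t) (B₂ (t + 1)))| ≤ γ₁ * D := by
      rw [abs_mul, abs_of_nonneg hγ₁0]
      exact mul_le_mul_of_nonneg_left ((abs_min_sub_min_le _ _ _).trans (hleD (t + 1))) hγ₁0
    calc |(γ₂ - γ₁) * ℓ t + (γ₁ - γ₂) * min (ℓ t) (B₂ (t + 1))
          + γ₁ * (min (ℓ t) (B₁ (t + 1)) - min (ℓ t) (B₂ (t + 1)))|
        ≤ |(γ₂ - γ₁) * ℓ t + (γ₁ - γ₂) * min (ℓ t) (B₂ (t + 1))|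
          + |γ₁ * (min (ℓ t) (B₁ (t + 1)) - min (ℓ t) (B₂ (t + 1)))| := abs_add_le _ _
      _ ≤ (|(γ₂ - γ₁) * ℓ t| + |(γ₁ - γ₂) * min (ℓ t) (B₂ (t + 1))|)
          + |γ₁ * (min (ℓ t) (B₁ (t + 1)) - min (ℓ t) (B₂ (t + 1)))| :=
            add_le_add_left (abs_add_le _ _) _
      _ ≤ (|γ₁ - γ₂| * M + |γ₁ - γ₂| * M) + γ₁ * D := add_le_add (add_le_add h1 h2) h3
      _ = 2 * M * |γ₁ - γ₂| + γ₁ * D := by ring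
  intro t
  have hmax : max γ₁ γ₂ < 1 := max_lt hγ₁1 hγ₂1
  have hden : 0 < 1 - max γ₁ γ₂ := by linarith
  refine (hleD t).trans ?_
  rw [le_div_iff₀ hden]
  have h1 : γ₁ ≤ max γ₁ γ₂ := le_max_left _ _
  nlinarith [mul_nonneg hD0 (le_of_lt hden)]
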